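/- Let G be a connected graph with a cycle C, rooted at a vertex v₀, where h(v) denotes distance to v₀. If G is unicyclic (exactly one cycle), then the vertex of C of minimal height is unique: there do not exist two distinct vertices of C at the same minimal height. -/

import Mathlib

open Matrix Finset SimpleGraph
open scoped Classical

/-- Degree of a vertex (no decidability assumptions). -/
noncomputable def deg {V : Type*} (G : SimpleGraph V) (v : V) : ℕ :=
  (G.neighborSet v).ncard

/-- The matrix `A_alpha(G) = alpha D(G) + (1-alpha) A(G)`. -/
noncomputable def Aalpha {V : Type*} [Fintype V] (G : SimpleGraph V) (α : ℝ) :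
    Matrix V V ℝ :=
  fun i j => if i = j then α * (deg G i : ℝ) else if G.Adj i j then 1 - α else 0

/-- The spectral radius (largest eigenvalue) of a real symmetric matrix,
as the supremum of its eigenvalues. -/
noncomputable def specRad {V : Type*} [Fintype V] (M : Matrix V V ℝ) : ℝ :=
  sSup {t : ℝ | ∃ x : V → ℝ, x ≠ 0 ∧ M.mulVec x = t • x}

lemma exists_parent {n : ℕ} (G : SimpleGraph (Fin n)) (hG : G.Connected) (v₀ v : Fin n)
    (h : G.dist v₀ v ≠ 0) : ∃ p, G.Adj p v ∧ G.dist v₀ p + 1 = G.dist v₀ v := by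
  obtain ⟨q, hq⟩ := hG.exists_walk_length_eq_dist v v₀
  cases q with
  | nil =>
    rw [SimpleGraph.dist_comm] at h
    simp [← hq] at h
  | @cons _ p _ hadj q' =>
    refine ⟨p, hadj.symm, ?_⟩
    have h1 : G.dist v₀ p ≤ q'.length := by
      rw [SimpleGraph.dist_comm]; exact SimpleGraph.dist_le q'
    have h2 : G.dist v₀ v ≤ G.dist v₀ p + 1 := by
      have ht := hG.dist_triangle (u := v₀) (v := p) (w := v)
      have hpv : G.dist p v = 1 := (SimpleGraph.dist_eq_one_iff_adj).mpr hadj.symm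
      omega
    have h3 : q'.length + 1 = G.dist v₀ v := by
      rw [SimpleGraph.dist_comm]; exact hq
    omega

theorem stmt_17 {n : ℕ} (G : SimpleGraph (Fin n)) (hG : G.Connected)
    (hedge : G.edgeSet.ncard = n)
    (a : Fin n) (c : G.Walk a a) (hc : c.IsCycle)
    (v₀ u w : Fin n)
    (hu : u ∈ c.support) (hw : w ∈ c.support)
    (hmu : ∀ z ∈ c.support, G.dist v₀ u ≤ G.dist v₀ z)
    (hmw : ∀ z ∈ c.support, G.dist v₀ w ≤ G.dist v₀ z) :
    u = w := by
  classical
  by_contra hne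
  set d := G.dist v₀ u with hd
  have hdw : G.dist v₀ w = d := le_antisymm (hmw u hu) (hmu w hw)
  -- d ≠ 0
  have hd0 : d ≠ 0 := by
    intro h0
    apply hne
    have h1 : v₀ = u := (hG.dist_eq_zero_iff).mp h0
    have h2 : v₀ = w := (hG.dist_eq_zero_iff).mp (by rw [hdw]; exact h0)
    rw [← h1, ← h2]
  -- parent function
  set P : Fin n → Fin n := fun v =>
    if h : G.dist v₀ v ≠ 0 then (exists_parent G hG v₀ v h).choose else v₀ with hPdef
  have hP : ∀ v, G.dist v₀ v ≠ 0 →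
      G.Adj (P v) v ∧ G.dist v₀ (P v) + 1 = G.dist v₀ v := by
    intro v h
    simp only [hPdef, dif_pos h]
    exact (exists_parent G hG v₀ v h).choose_spec
  -- the set of non-root vertices
  set F : Finset (Fin n) := univ.filter (fun v => G.dist v₀ v ≠ 0) with hFdef
  have hFerase : F = univ.erase v₀ := by
    ext v
    simp [hFdef, Finset.mem_erase, hG.dist_eq_zero_iff, eq_comm]
  have hFcard : F.card = n - 1 := by
    rw [hFerase, Finset.card_erase_of_mem (Finset.mem_univ v₀)]
    simp
  -- the "tree edges"
  set T : Finset (Sym2 (Fin n)) := F.image (fun v => s(v, P v)) with hTdef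
  have hinjF : Set.InjOn (fun v => s(v, P v)) F := by
    intro x hx y hy hxy
    simp only [hFdef, Finset.coe_filter, Set.mem_setOf_eq] at hx hy
    obtain ⟨hx1, hx2⟩ := hP x hx.2
    obtain ⟨hy1, hy2⟩ := hP y hy.2
    simp only [Sym2.eq, Sym2.rel_iff', Prod.mk.injEq, Prod.swap_prod_mk] at hxy
    rcases hxy with ⟨h1, h2⟩ | ⟨h1, h2⟩
    · exact h1
    · exfalso
      rw [← h1] at hy2
      rw [h2] at hx2
      omega
  have hTcard : T.card = n - 1 := by
    have h := Finset.card_image_of_injOn (s := F) hinjF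
    rw [hFcard] at h
    exact h
  have hTsub : T ⊆ G.edgeFinset := by
    intro e he
    rw [hTdef, Finset.mem_image] at he
    obtain ⟨v, hv, rfl⟩ := he
    rw [hFdef, Finset.mem_filter] at hv
    rw [SimpleGraph.mem_edgeFinset, SimpleGraph.mem_edgeSet]
    exact ((hP v hv.2).1).symm
  have hn1 : 1 ≤ n := Nat.one_le_iff_ne_zero.mpr (by rintro rfl; exact a.elim0)
  have hEall : G.edgeFinset.card = n := by
    have h : G.edgeSet.ncard = G.edgeFinset.card := by
      rw [Set.ncard_eq_toFinset_card']
      congr 1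
    omega
  have hsdiff : (G.edgeFinset \ T).card = 1 := by
    rw [Finset.card_sdiff_of_subset hTsub, hEall, hTcard]
    omega
  -- cycle edges and support
  set E : Finset (Sym2 (Fin n)) := c.edges.toFinset with hEdef
  set S : Finset (Fin n) := c.support.toFinset with hSdef
  have hL3 : 3 ≤ c.length := hc.three_le_length
  have hEcard : E.card = c.length := by
    rw [hEdef, List.toFinset_card_of_nodup hc.edges_nodup, SimpleGraph.Walk.length_edges]
  have haTail : a ∈ c.support.tail := by
    cases c with
    | nil => simpa using hc.three_le_length
    | cons h q => simpa using q.end_mem_support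
  have hScard : S.card = c.length := by
    have h1 : c.support = a :: c.support.tail := c.support_eq_cons
    have h2 : S = c.support.tail.toFinset := by
      rw [hSdef]
      conv_lhs => rw [h1]
      rw [List.toFinset_cons, Finset.insert_eq_self.mpr (List.mem_toFinset.mpr haTail)]
    rw [h2, List.toFinset_card_of_nodup hc.support_nodup]
    have := c.length_support
    rw [h1] at this
    simpa using this
  -- The injection from tree cycle-edges to non-minimal cycle vertices
  set f : Sym2 (Fin n) → Fin n := fun e =>
    if h : ∃ v ∈ F, s(v, P v) = e then h.choose else v₀ with hfdef
  set ET : Finset (Sym2 (Fin n)) := E.filter (fun e => e ∈ T) with hETdef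
  have hkey : ∀ e ∈ ET, f e ∈ F ∧ s(f e, P (f e)) = e := by
    intro e he
    rw [hETdef, Finset.mem_filter, hTdef, Finset.mem_image] at he
    have hex : ∃ v ∈ F, s(v, P v) = e := he.2
    simp only [hfdef, dif_pos hex]
    exact hex.choose_spec
  have hmaps : ∀ e ∈ ET, f e ∈ S \ {u, w} := by
    intro e he
    obtain ⟨hvF, hve⟩ := hkey e he
    have heE : e ∈ c.edges := by
      have := (Finset.mem_filter.mp he).1
      rwa [hEdef, List.mem_toFinset] at this
    rw [← hve] at heE
    have hsup1 : f e ∈ c.support := c.fst_mem_support_of_mem_edges heE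
    have hsup2 : P (f e) ∈ c.support := c.snd_mem_support_of_mem_edges heE
    rw [hFdef, Finset.mem_filter] at hvF
    obtain ⟨_, hPadj⟩ := hP (f e) hvF.2
    have hge : d ≤ G.dist v₀ (P (f e)) := hmu _ hsup2
    have hgt : d < G.dist v₀ (f e) := by omega
    rw [Finset.mem_sdiff]
    refine ⟨List.mem_toFinset.mpr hsup1, ?_⟩
    simp only [Finset.mem_insert, Finset.mem_singleton]
    push_neg
    constructor
    · intro h; rw [h] at hgt; omega
    · intro h; rw [h] at hgt; rw [hdw] at hgt; omega
  have hinj : Set.InjOn f ET := by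
    intro x hx y hy hxy
    have h1 := (hkey x hx).2
    have h2 := (hkey y hy).2
    rw [← h1, ← h2, hxy]
  have hETcard : ET.card ≤ c.length - 2 := by
    have h1 : ET.card ≤ (S \ {u, w}).card := Finset.card_le_card_of_injOn f hmaps hinj
    have h2 : ({u, w} : Finset (Fin n)) ⊆ S := by
      intro x hx
      simp only [Finset.mem_insert, Finset.mem_singleton] at hx
      rcases hx with rfl | rfl
      · exact List.mem_toFinset.mpr hu
      · exact List.mem_toFinset.mpr hw
    have h3 : (S \ ({u, w} : Finset (Fin n))).card = S.card - 2 := by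
      rw [Finset.card_sdiff_of_subset h2, Finset.card_pair hne]
    omega
  have hnot : (E.filter (fun e => e ∉ T)).card ≤ 1 := by
    rw [← hsdiff]
    apply Finset.card_le_card
    intro e he
    rw [Finset.mem_filter] at he
    rw [Finset.mem_sdiff]
    refine ⟨?_, he.2⟩
    have := he.1
    rw [hEdef, List.mem_toFinset] at this
    exact SimpleGraph.mem_edgeFinset.mpr (c.edges_subset_edgeSet this)
  have hsplit : ET.card + (E.filter (fun e => e ∉ T)).card = E.card :=
    Finset.card_filter_add_card_filter_not (fun e => e ∈ T)
  omega
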